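/- Let σ_x := !![0,1;1,0], σ_y := !![0,-i;i,0], σ_z := !![1,0;0,-1] be the Pauli matrices in Matrix (Fin 2) (Fin 2) ℂ and let ω₀, ω₁, ω_rf ∈ ℝ. Define H(t) := (ω₀/2) • σ_z + cos(ω_rf t) • ((ω₁/2) • σ_x) + sin(ω_rf t) • ((ω₁/2) • σ_y) and U(t) := exp(-i (ω_rf t / 2) • σ_z) * exp(-i t • (((ω₀ - ω_rf)/2) • σ_z + (ω₁/2) • σ_x)). Then U(0) = 1 and for every t ∈ ℝ, HasDerivAt U (-i • (H(t) * U(t))) t; i.e. U is the exact propagator of the circularly driven qubit. -/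

import Mathlib

open NormedSpace

section linfty
attribute [local instance] Matrix.linftyOpNormedAddCommGroup Matrix.linftyOpNormedSpace
  Matrix.linftyOpNormedRing Matrix.linftyOpNormedAlgebra

lemma aux_slope (C D : Matrix (Fin 2) (Fin 2) ℂ) (t : ℝ) :
    Filter.Tendsto (slope (fun u : ℝ => exp (u • C) * exp (u • D)) t) (nhdsWithin t {t}ᶜ)
      (nhds ((C * exp (t • C)) * exp (t • D) + exp (t • C) * (D * exp (t • D)))) := by
  refine hasDerivAt_iff_tendsto_slope.mp ?_
  have h1 : HasDerivAt (fun u : ℝ => exp (u • C)) (C * exp (t • C)) t := by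
    exact hasDerivAt_exp_smul_const' C t
  have h2 : HasDerivAt (fun u : ℝ => exp (u • D)) (D * exp (t • D)) t := by
    exact hasDerivAt_exp_smul_const' D t
  exact h1.mul h2

end linfty

attribute [local instance] Matrix.normedAddCommGroup Matrix.normedSpace

/-- The exact propagator of a qubit driven by a circularly polarized field:
`U(t) = exp(-i ω_rf t σ_z / 2) exp(-i t ((ω₀-ω_rf)/2 σ_z + ω₁/2 σ_x))` satisfies
`U(0) = 1` and the Schrödinger equation `i U' = H(t) U` with
`H(t) = (ω₀/2) σ_z + cos(ω_rf t)(ω₁/2) σ_x + sin(ω_rf t)(ω₁/2) σ_y`. -/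
theorem stmt_13 (ω₀ ω₁ ωrf : ℝ)
    (σx σy σz : Matrix (Fin 2) (Fin 2) ℂ)
    (hσx : σx = !![0, 1; 1, 0])
    (hσy : σy = !![0, -Complex.I; Complex.I, 0])
    (hσz : σz = !![1, 0; 0, -1])
    (H : ℝ → Matrix (Fin 2) (Fin 2) ℂ)
    (hH : ∀ t : ℝ, H t = ((ω₀ : ℂ) / 2) • σz +
        ((Real.cos (ωrf * t) : ℝ) : ℂ) • (((ω₁ : ℂ) / 2) • σx) +
        ((Real.sin (ωrf * t) : ℝ) : ℂ) • (((ω₁ : ℂ) / 2) • σy))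
    (U : ℝ → Matrix (Fin 2) (Fin 2) ℂ)
    (hU : ∀ t : ℝ, U t =
        NormedSpace.exp ((-Complex.I * ((ωrf * t / 2 : ℝ) : ℂ)) • σz) *
        NormedSpace.exp ((-Complex.I * (t : ℂ)) •
          ((((ω₀ - ωrf) / 2 : ℝ) : ℂ) • σz + ((ω₁ : ℂ) / 2) • σx))) :
    U 0 = 1 ∧ ∀ t : ℝ, HasDerivAt U ((-Complex.I) • (H t * U t)) t := by
  set M : Matrix (Fin 2) (Fin 2) ℂ :=
    (((ω₀ - ωrf) / 2 : ℝ) : ℂ) • σz + ((ω₁ : ℂ) / 2) • σx with hM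
  set C : Matrix (Fin 2) (Fin 2) ℂ := (-Complex.I * ((ωrf / 2 : ℝ) : ℂ)) • σz with hC
  set D : Matrix (Fin 2) (Fin 2) ℂ := (-Complex.I) • M with hD
  have hUfun : U = fun u : ℝ => exp (u • C) * exp (u • D) := by
    funext u
    rw [hU u]
    congr 2
    · rw [hC, ← smul_assoc]
      congr 1
      rw [Complex.real_smul]
      push_cast
      ring
    · rw [hD, ← smul_assoc]
      congr 1
      rw [Complex.real_smul]
      ring
  constructor
  · rw [hUfun]
    norm_num [exp_zero]
  · intro t
    have hder : HasDerivAt U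
        ((C * exp (t • C)) * exp (t • D) + exp (t • C) * (D * exp (t • D))) t := by
      rw [hUfun]; refine hasDerivAt_iff_tendsto_slope.mpr ?_
      exact aux_slope C D t
    convert hder using 1
    have hA : exp (t • C) =
        !![Complex.exp (-Complex.I * ((ωrf * t / 2 : ℝ) : ℂ)), 0;
           0, Complex.exp (-(-Complex.I * ((ωrf * t / 2 : ℝ) : ℂ)))] := by
      have h1 : t • C = Matrix.diagonal
          ![(-Complex.I * ((ωrf * t / 2 : ℝ) : ℂ)), -(-Complex.I * ((ωrf * t / 2 : ℝ) : ℂ))] := by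
        rw [hC, ← smul_assoc, Complex.real_smul, hσz]
        ext i j
        fin_cases i <;> fin_cases j <;>
          simp [Matrix.diagonal_apply] <;> push_cast <;> ring
      rw [h1, Matrix.exp_diagonal]
      ext i j
      fin_cases i <;> fin_cases j <;>
        simp [Matrix.diagonal_apply, Complex.exp_eq_exp_ℂ]
    have hB : U t = exp (t • C) * exp (t • D) := by rw [hUfun]
    rw [hB, ← mul_assoc, ← mul_assoc, ← smul_mul_assoc, ← add_mul]
    congr 1
    rw [hH, hA, hC, hD, hM, hσx, hσy, hσz]
    set c : ℂ := ((Real.cos (ωrf * t) : ℝ) : ℂ) with hc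
    set s : ℂ := ((Real.sin (ωrf * t) : ℝ) : ℂ) with hs
    set e1 : ℂ := Complex.exp (-Complex.I * ((ωrf * t / 2 : ℝ) : ℂ)) with he1
    set e2 : ℂ := Complex.exp (-(-Complex.I * ((ωrf * t / 2 : ℝ) : ℂ))) with he2
    have kA : (c - s * Complex.I) * e2 = e1 := by
      rw [hc, hs, he1, he2]
      rw [show ((Real.cos (ωrf * t) : ℝ) : ℂ) - ((Real.sin (ωrf * t) : ℝ) : ℂ) * Complex.I =
          Complex.exp (-((ωrf * t : ℝ) : ℂ) * Complex.I) by
        rw [Complex.exp_mul_I, Complex.cos_neg, Complex.sin_neg, Complex.ofReal_cos,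
          Complex.ofReal_sin]; ring]
      rw [← Complex.exp_add]
      congr 1
      push_cast
      ring
    have kB : (c + s * Complex.I) * e1 = e2 := by
      rw [hc, hs, he1, he2]
      rw [show ((Real.cos (ωrf * t) : ℝ) : ℂ) + ((Real.sin (ωrf * t) : ℝ) : ℂ) * Complex.I =
          Complex.exp (((ωrf * t : ℝ) : ℂ) * Complex.I) by
        rw [Complex.exp_mul_I, Complex.ofReal_cos, Complex.ofReal_sin]]
      rw [← Complex.exp_add]
      congr 1
      push_cast
      ring
    ext i j
    fin_cases i <;> fin_cases j <;>
      simp [Matrix.mul_apply, Fin.sum_univ_succ] <;>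
      push_cast <;>
      first
        | ring1
        | linear_combination (-Complex.I * (ω₁ : ℂ) / 2) * kA
        | linear_combination (-Complex.I * (ω₁ : ℂ) / 2) * kB
        | linear_combination (Complex.I * (ω₁ : ℂ) / 2) * kA
        | linear_combination (Complex.I * (ω₁ : ℂ) / 2) * kB
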